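/- Let (R(t))_{t>0} ⊆ L(X,Y) be a strongly continuous operator family with ∫_0^∞ ‖R(s)‖ ds < ∞. If f : [0,∞) → X is quasi-asymptotically almost periodic, then F(t) = ∫_0^t R(t−s) f(s) ds is quasi-asymptotically almost periodic from [0,∞) into Y. -/

import Mathlib

open Set Filter MeasureTheory

def IsQAAP {X : Type*} [NormedAddCommGroup X] (I : Set ℝ) (f : ℝ → X) : Prop :=
  ContinuousOn f I ∧ (∃ C, ∀ t ∈ I, ‖f t‖ ≤ C) ∧
  ∀ ε > (0:ℝ), ∃ L > (0:ℝ), ∀ a : ℝ, Set.Icc a (a + L) ⊆ I →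
    ∃ τ ∈ Set.Icc a (a + L), ∃ M > (0:ℝ),
      ∀ t ∈ I, M ≤ |t| → ‖f (t + τ) - f t‖ ≤ ε

def IsAAP {X : Type*} [NormedAddCommGroup X] (I : Set ℝ) (f : ℝ → X) : Prop :=
  ContinuousOn f I ∧ (∃ C, ∀ t ∈ I, ‖f t‖ ≤ C) ∧
  ∀ ε > (0:ℝ), ∃ l > (0:ℝ), ∃ M > (0:ℝ), ∀ a : ℝ, Set.Icc a (a + l) ⊆ I →
    ∃ τ ∈ Set.Icc a (a + l),
      ∀ t ∈ I, M ≤ |t| → M ≤ |t + τ| → ‖f (t + τ) - f t‖ ≤ ε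
open Topology
set_option linter.unusedSectionVars false
set_option linter.unusedVariables false

lemma aesm_apply {α : Type*} [MeasurableSpace α] {μ : Measure α}
    {X Y : Type*} [NormedAddCommGroup X] [NormedSpace ℝ X]
    [NormedAddCommGroup Y] [NormedSpace ℝ Y]
    {φ : α → X →L[ℝ] Y} (hφ : ∀ x : X, AEStronglyMeasurable (fun a => φ a x) μ)
    {g : α → X} (hg : AEStronglyMeasurable g μ) :
    AEStronglyMeasurable (fun a => φ a (g a)) μ := by
  obtain ⟨g', hg', hgg'⟩ := hg
  have key : AEStronglyMeasurable (fun a => φ a (g' a)) μ := by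
    have happrox : ∀ n, AEStronglyMeasurable (fun a => φ a (hg'.approx n a)) μ := by
      intro n
      have heq : (fun a => φ a (hg'.approx n a)) =
          fun a => ∑ x ∈ (hg'.approx n).range,
            Set.indicator ((hg'.approx n) ⁻¹' {x}) (fun a => φ a x) a := by
        funext a
        rw [Finset.sum_eq_single_of_mem (hg'.approx n a) (SimpleFunc.mem_range_self _ a)]
        · rw [Set.indicator_of_mem (by simp)]
        · intro b _ hb
          exact Set.indicator_of_notMem (by simp [Ne.symm hb]) _
      rw [heq]
      exact Finset.aestronglyMeasurable_fun_sum _ fun x _ =>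
        (hφ x).indicator ((hg'.approx n).measurableSet_fiber x)
    exact aestronglyMeasurable_of_tendsto_ae atTop happrox
      (ae_of_all _ fun a => ((φ a).continuous.tendsto _).comp (hg'.tendsto_approx a))
  exact key.congr (hgg'.mono fun a ha => by simp only [ha])

section Conv

variable {X Y : Type*} [NormedAddCommGroup X] [NormedSpace ℝ X]
  [NormedAddCommGroup Y] [NormedSpace ℝ Y] [CompleteSpace Y]
  {R : ℝ → X →L[ℝ] Y} {f : ℝ → X}

lemma conv_aesm (hRc : ∀ x : X, ContinuousOn (fun t => R t x) (Set.Ioi 0))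
    (hfc : ContinuousOn f (Ici 0)) {c : ℝ} (hc : 0 ≤ c) :
    AEStronglyMeasurable (fun u => R u (f (c - u))) (volume.restrict (Ioc 0 c)) := by
  apply aesm_apply
  · intro x
    exact ((hRc x).aestronglyMeasurable measurableSet_Ioi).mono_measure
      (Measure.restrict_mono Ioc_subset_Ioi_self le_rfl)
  · have hcont : ContinuousOn (fun u => f (c - u)) (Ioc 0 c) := by
      apply hfc.comp ((continuous_const.sub continuous_id).continuousOn)
      intro u hu
      exact sub_nonneg.2 hu.2
    exact hcont.aestronglyMeasurable measurableSet_Ioc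

lemma conv_int (hRc : ∀ x : X, ContinuousOn (fun t => R t x) (Set.Ioi 0))
    (hRint : MeasureTheory.IntegrableOn (fun s => ‖R s‖) (Set.Ioi 0))
    (hfc : ContinuousOn f (Ici 0)) {C : ℝ} (hC : ∀ t ∈ Ici (0:ℝ), ‖f t‖ ≤ C)
    {c : ℝ} (hc : 0 ≤ c) :
    IntegrableOn (fun u => R u (f (c - u))) (Ioc 0 c) := by
  apply Integrable.mono' ((hRint.mono_set Ioc_subset_Ioi_self).mul_const C)
    (conv_aesm hRc hfc hc)
  filter_upwards [ae_restrict_mem measurableSet_Ioc] with u hu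
  calc ‖R u (f (c - u))‖ ≤ ‖R u‖ * ‖f (c - u)‖ := (R u).le_opNorm _
    _ ≤ ‖R u‖ * C :=
      mul_le_mul_of_nonneg_left (hC _ (sub_nonneg.2 hu.2)) (norm_nonneg _)

lemma conv_eq (R : ℝ → X →L[ℝ] Y) (f : ℝ → X) {t : ℝ} (ht : 0 ≤ t) :
    (∫ s in (0:ℝ)..t, R (t - s) (f s)) = ∫ u in Ioc 0 t, R u (f (t - u)) := by
  have h1 : (∫ s in (0:ℝ)..t, R (t - s) (f s))
      = ∫ s in (0:ℝ)..t, (fun u => R u (f (t - u))) (t - s) := by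
    simp only [sub_sub_cancel]
  rw [h1, intervalIntegral.integral_comp_sub_left (fun u => R u (f (t - u))) t,
    sub_self, sub_zero, intervalIntegral.integral_of_le ht]

lemma conv_piece_bound (hRc : ∀ x : X, ContinuousOn (fun t => R t x) (Set.Ioi 0))
    (hRint : MeasureTheory.IntegrableOn (fun s => ‖R s‖) (Set.Ioi 0))
    (hfc : ContinuousOn f (Ici 0)) {C : ℝ} (hC : ∀ t ∈ Ici (0:ℝ), ‖f t‖ ≤ C)
    {c : ℝ} (hc : 0 ≤ c) {s T : Set ℝ} (hsm : MeasurableSet s) (hTm : MeasurableSet T)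
    (hs : s ⊆ Ioc 0 c) (hsT : s ⊆ T) (hT : T ⊆ Ioi 0) :
    ‖∫ u in s, R u (f (c - u))‖ ≤ C * ∫ u in T, ‖R u‖ := by
  have hC0 : 0 ≤ C := le_trans (norm_nonneg _) (hC 0 self_mem_Ici)
  have hint : IntegrableOn (fun u => R u (f (c - u))) s :=
    (conv_int hRc hRint hfc hC hc).mono_set hs
  calc ‖∫ u in s, R u (f (c - u))‖ ≤ ∫ u in s, ‖R u (f (c - u))‖ :=
        norm_integral_le_integral_norm _
    _ ≤ ∫ u in s, ‖R u‖ * C := by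
        apply setIntegral_mono_on hint.norm
          (((hRint.mono_set (hs.trans Ioc_subset_Ioi_self)).mul_const C)) hsm
        intro u hu
        have hu' := hs hu
        calc ‖R u (f (c - u))‖ ≤ ‖R u‖ * ‖f (c - u)‖ := (R u).le_opNorm _
          _ ≤ ‖R u‖ * C :=
            mul_le_mul_of_nonneg_left (hC _ (sub_nonneg.2 hu'.2)) (norm_nonneg _)
    _ ≤ ∫ u in T, ‖R u‖ * C := by
        apply setIntegral_mono_set ((hRint.mono_set hT).mul_const C)
        · filter_upwards [] with u using mul_nonneg (norm_nonneg _) hC0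
        · exact HasSubset.Subset.eventuallyLE hsT
    _ = C * ∫ u in T, ‖R u‖ := by rw [integral_mul_const, mul_comm]

lemma tail_small (hRint : MeasureTheory.IntegrableOn (fun s => ‖R s‖) (Set.Ioi 0))
    {δ : ℝ} (hδ : 0 < δ) :
    ∃ T0 : ℝ, 0 < T0 ∧ (∫ u in Ioi T0, ‖R u‖) ≤ δ := by
  set A := ∫ u in Ioi (0:ℝ), ‖R u‖ with hA
  have hunion : ⋃ n : ℕ, Ioc (0:ℝ) n = Ioi 0 := by
    ext x
    simp only [mem_iUnion, mem_Ioc, mem_Ioi]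
    constructor
    · rintro ⟨n, h1, _⟩; exact h1
    · intro hx
      obtain ⟨n, hn⟩ := exists_nat_ge x
      exact ⟨n, hx, hn⟩
  have htend := tendsto_setIntegral_of_monotone (f := fun u => ‖R u‖) (μ := volume)
    (s := fun n : ℕ => Ioc (0:ℝ) n) (fun n => measurableSet_Ioc)
    (fun m n h => Ioc_subset_Ioc_right (Nat.cast_le.2 h)) (by rw [hunion]; exact hRint)
  rw [hunion] at htend
  have h0 : Tendsto (fun n : ℕ => A - ∫ u in Ioc (0:ℝ) n, ‖R u‖) atTop (𝓝 0) := by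
    have := tendsto_const_nhds (x := A) (f := atTop (α := ℕ)) |>.sub htend
    rwa [sub_self] at this
  obtain ⟨n, hn, hn1⟩ :=
    ((h0.eventually (Iio_mem_nhds hδ)).and (eventually_ge_atTop 1)).exists
  have hsum : (∫ u in Ioc (0:ℝ) n, ‖R u‖) + ∫ u in Ioi (n:ℝ), ‖R u‖ = A := by
    rw [← setIntegral_union Ioc_disjoint_Ioi_same measurableSet_Ioi
      (hRint.mono_set Ioc_subset_Ioi_self)
      (hRint.mono_set (Ioi_subset_Ioi (Nat.cast_nonneg n))),
      Ioc_union_Ioi_eq_Ioi (Nat.cast_nonneg n)]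
  refine ⟨n, by exact_mod_cast Nat.lt_of_lt_of_le Nat.zero_lt_one hn1, ?_⟩
  have := hn
  linarith

end Conv

/-- Invariance of quasi-asymptotic almost periodicity under the finite
convolution product F(t) = ∫_0^t R(t−s) f(s) ds. -/
theorem isQAAP_finite_convolution {X Y : Type*}
    [NormedAddCommGroup X] [NormedSpace ℝ X]
    [NormedAddCommGroup Y] [NormedSpace ℝ Y] [CompleteSpace Y]
    (R : ℝ → X →L[ℝ] Y)
    (hRc : ∀ x : X, ContinuousOn (fun t => R t x) (Set.Ioi 0))
    (hRint : MeasureTheory.IntegrableOn (fun s => ‖R s‖) (Set.Ioi 0))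
    (f : ℝ → X) (hf : IsQAAP (Set.Ici 0) f) :
    IsQAAP (Set.Ici 0) (fun t => ∫ s in (0:ℝ)..t, (R (t - s)) (f s)) := by
  obtain ⟨hfc, ⟨C0, hC0⟩, hfq⟩ := hf
  set C := max C0 0 with hCdef
  have hC : ∀ t ∈ Ici (0:ℝ), ‖f t‖ ≤ C := fun t ht => (hC0 t ht).trans (le_max_left _ _)
  have hCnn : (0:ℝ) ≤ C := le_max_right _ _
  set A := ∫ u in Ioi (0:ℝ), ‖R u‖ with hAdef
  have hA : 0 ≤ A := setIntegral_nonneg measurableSet_Ioi fun _ _ => norm_nonneg _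
  have hrepr : ∀ t ∈ Ici (0:ℝ), (∫ s in (0:ℝ)..t, R (t - s) (f s))
      = ∫ u in Ioi (0:ℝ), Set.indicator (Ioc 0 t) (fun u => R u (f (t - u))) u := by
    intro t ht
    rw [conv_eq R f ht, setIntegral_indicator measurableSet_Ioc,
      Set.inter_eq_self_of_subset_right Ioc_subset_Ioi_self]
  refine ⟨?_, ⟨C * A, ?_⟩, ?_⟩
  · -- continuity
    intro t₀ ht₀
    have key : Tendsto
        (fun t => ∫ u in Ioi (0:ℝ), Set.indicator (Ioc 0 t) (fun u => R u (f (t - u))) u)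
        (𝓝[Ici 0] t₀)
        (𝓝 (∫ u in Ioi (0:ℝ), Set.indicator (Ioc 0 t₀) (fun u => R u (f (t₀ - u))) u)) := by
      apply tendsto_integral_filter_of_dominated_convergence (fun u => ‖R u‖ * C)
      · filter_upwards [self_mem_nhdsWithin] with t ht
        rw [aestronglyMeasurable_indicator_iff measurableSet_Ioc,
          Measure.restrict_restrict measurableSet_Ioc,
          Set.inter_eq_self_of_subset_left Ioc_subset_Ioi_self]
        exact conv_aesm hRc hfc ht
      · filter_upwards [self_mem_nhdsWithin] with t ht
        refine ae_of_all _ fun u => ?_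
        by_cases hu : u ∈ Ioc 0 t
        · rw [Set.indicator_of_mem hu]
          calc ‖R u (f (t - u))‖ ≤ ‖R u‖ * ‖f (t - u)‖ := (R u).le_opNorm _
            _ ≤ ‖R u‖ * C :=
              mul_le_mul_of_nonneg_left (hC _ (sub_nonneg.2 hu.2)) (norm_nonneg _)
        · rw [Set.indicator_of_notMem hu, norm_zero]
          exact mul_nonneg (norm_nonneg _) hCnn
      · exact hRint.mul_const C
      · have h1 : ∀ᵐ u ∂volume.restrict (Ioi (0:ℝ)), u ∈ Ioi (0:ℝ) :=
          ae_restrict_mem measurableSet_Ioi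
        have h2 : ∀ᵐ u ∂volume.restrict (Ioi (0:ℝ)), u ≠ t₀ := by
          refine ae_restrict_of_ae ?_
          have : (volume : Measure ℝ) {t₀} = 0 := measure_singleton t₀
          filter_upwards [measure_eq_zero_iff_ae_notMem.1 this] with u hu
          simpa using hu
        filter_upwards [h1, h2] with u hu hne
        rcases lt_or_gt_of_ne hne with hlt | hgt
        · have hev : ∀ᶠ t in 𝓝[Ici 0] t₀, u ∈ Ioc 0 t := by
          -- u < t₀
            filter_upwards [nhdsWithin_le_nhds (Ioi_mem_nhds hlt)] with t ht
            exact ⟨hu, le_of_lt ht⟩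
          have htend : Tendsto (fun t => R u (f (t - u))) (𝓝[Ici 0] t₀)
              (𝓝 (R u (f (t₀ - u)))) := by
            apply ((R u).continuous.tendsto _).comp
            apply ((hfc (t₀ - u) (sub_nonneg.2 hlt.le)).tendsto).comp
            rw [tendsto_nhdsWithin_iff]
            constructor
            · exact ((continuous_id.sub continuous_const).tendsto t₀).mono_left
                nhdsWithin_le_nhds
            · filter_upwards [hev] with t ht
              exact sub_nonneg.2 ht.2
          rw [show (Ioc 0 t₀).indicator (fun u => R u (f (t₀ - u))) u
            = R u (f (t₀ - u)) from Set.indicator_of_mem (show u ∈ Ioc 0 t₀ from ⟨hu, hlt.le⟩) _]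
          refine Tendsto.congr' ?_ htend
          filter_upwards [hev] with t ht
          rw [Set.indicator_of_mem ht]
        · have hev : ∀ᶠ t in 𝓝[Ici 0] t₀,
              Set.indicator (Ioc 0 t) (fun u => R u (f (t - u))) u = 0 := by
            filter_upwards [nhdsWithin_le_nhds (Iio_mem_nhds hgt)] with t ht
            exact Set.indicator_of_notMem (fun hmem => absurd hmem.2 (not_le.2 ht)) _
          rw [Set.indicator_of_notMem (fun hmem => absurd hmem.2 (not_le.2 hgt)) _]
          exact Tendsto.congr' (hev.mono fun t h => h.symm) tendsto_const_nhds
    have heq : (fun t => ∫ u in Ioi (0:ℝ),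
          Set.indicator (Ioc 0 t) (fun u => R u (f (t - u))) u) =ᶠ[𝓝[Ici 0] t₀]
        (fun t => ∫ s in (0:ℝ)..t, R (t - s) (f s)) := by
      filter_upwards [self_mem_nhdsWithin] with t ht
      exact (hrepr t ht).symm
    have key2 := key.congr' heq
    rw [← hrepr t₀ ht₀] at key2
    exact key2
  · -- boundedness
    intro t ht
    simp only []
    rw [conv_eq R f ht]
    exact conv_piece_bound hRc hRint hfc hC ht measurableSet_Ioc measurableSet_Ioi
      Set.Subset.rfl Ioc_subset_Ioi_self Set.Subset.rfl
  · -- qaap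
    intro ε hε
    set ε1 := ε / (4 * (A + 1)) with hε1def
    have hε1 : 0 < ε1 := by positivity
    obtain ⟨L, hL, hLp⟩ := hfq ε1 hε1
    refine ⟨L, hL, fun a ha => ?_⟩
    obtain ⟨τ, hτmem, M, hM, hτ⟩ := hLp a ha
    have ha0 : (0:ℝ) ≤ a := ha (Set.left_mem_Icc.2 (by linarith))
    have hτ0 : 0 ≤ τ := le_trans ha0 hτmem.1
    set δ := ε / (4 * (C + 1)) with hδdef
    have hδ : 0 < δ := by positivity
    obtain ⟨T0, hT0pos, hT0⟩ := tail_small hRint hδ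
    refine ⟨τ, hτmem, M + T0 + 1, by positivity, ?_⟩
    intro t ht hMt
    have ht0 : (0:ℝ) ≤ t := ht
    have ht' : M + T0 + 1 ≤ t := by rwa [abs_of_nonneg ht0] at hMt
    simp only []
    rw [conv_eq R f (by linarith : (0:ℝ) ≤ t + τ), conv_eq R f ht0]
    set P : ℝ → Y := fun u => R u (f (t + τ - u)) with hPdef
    set Q : ℝ → Y := fun u => R u (f (t - u)) with hQdef
    have hPint : IntegrableOn P (Ioc 0 (t + τ)) :=
      conv_int hRc hRint hfc hC (by linarith)
    have hQint : IntegrableOn Q (Ioc 0 t) := conv_int hRc hRint hfc hC ht0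
    have htM : (0:ℝ) ≤ t - M := by linarith
    have hsplit1 : (∫ u in Ioc 0 (t + τ), P u)
        = (∫ u in Ioc 0 t, P u) + ∫ u in Ioc t (t + τ), P u := by
      rw [← setIntegral_union (Ioc_disjoint_Ioc_of_le le_rfl) measurableSet_Ioc
        (hPint.mono_set (Ioc_subset_Ioc_right (by linarith)))
        (hPint.mono_set (Ioc_subset_Ioc_left ht0)),
        Ioc_union_Ioc_eq_Ioc ht0 (by linarith)]
    have hsplit2 : (∫ u in Ioc 0 t, P u)
        = (∫ u in Ioc 0 (t - M), P u) + ∫ u in Ioc (t - M) t, P u := by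
      rw [← setIntegral_union (Ioc_disjoint_Ioc_of_le le_rfl) measurableSet_Ioc
        ((hPint.mono_set (Ioc_subset_Ioc_right (by linarith))).mono_set
          (Ioc_subset_Ioc_right (by linarith)))
        ((hPint.mono_set (Ioc_subset_Ioc_right (by linarith))).mono_set
          (Ioc_subset_Ioc_left htM)),
        Ioc_union_Ioc_eq_Ioc htM (by linarith)]
    have hsplit3 : (∫ u in Ioc 0 t, Q u)
        = (∫ u in Ioc 0 (t - M), Q u) + ∫ u in Ioc (t - M) t, Q u := by
      rw [← setIntegral_union (Ioc_disjoint_Ioc_of_le le_rfl) measurableSet_Ioc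
        (hQint.mono_set (Ioc_subset_Ioc_right (by linarith)))
        (hQint.mono_set (Ioc_subset_Ioc_left htM)),
        Ioc_union_Ioc_eq_Ioc htM (by linarith)]
    have hdecomp : (∫ u in Ioc 0 (t + τ), P u) - (∫ u in Ioc 0 t, Q u)
        = ((∫ u in Ioc 0 (t - M), P u) - ∫ u in Ioc 0 (t - M), Q u)
          + ((∫ u in Ioc (t - M) t, P u) - ∫ u in Ioc (t - M) t, Q u)
          + ∫ u in Ioc t (t + τ), P u := by
      rw [hsplit1, hsplit2, hsplit3]; abel
    rw [hdecomp]
    -- bound each piece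
    have hB1 : ‖(∫ u in Ioc 0 (t - M), P u) - ∫ u in Ioc 0 (t - M), Q u‖ ≤ ε / 4 := by
      have hPint' : IntegrableOn P (Ioc 0 (t - M)) :=
        hPint.mono_set (Ioc_subset_Ioc_right (by linarith))
      have hQint' : IntegrableOn Q (Ioc 0 (t - M)) :=
        hQint.mono_set (Ioc_subset_Ioc_right (by linarith))
      rw [← integral_sub hPint' hQint']
      have hptw : ∀ u ∈ Ioc (0:ℝ) (t - M), ‖P u - Q u‖ ≤ ‖R u‖ * ε1 := by
        intro u hu
        have h1 : P u - Q u = R u (f (t + τ - u) - f (t - u)) := by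
          rw [map_sub]
        rw [h1]
        calc ‖R u (f (t + τ - u) - f (t - u))‖
            ≤ ‖R u‖ * ‖f (t + τ - u) - f (t - u)‖ := (R u).le_opNorm _
          _ ≤ ‖R u‖ * ε1 := by
              apply mul_le_mul_of_nonneg_left _ (norm_nonneg _)
              have heq : t + τ - u = (t - u) + τ := by ring
              rw [heq]
              apply hτ (t - u) (by simp only [mem_Ici]; linarith [hu.2])
              rw [abs_of_nonneg (by linarith [hu.2] : (0:ℝ) ≤ t - u)]
              linarith [hu.2]
      calc ‖∫ u in Ioc 0 (t - M), (P u - Q u)‖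
          ≤ ∫ u in Ioc 0 (t - M), ‖P u - Q u‖ := norm_integral_le_integral_norm _
        _ ≤ ∫ u in Ioc 0 (t - M), ‖R u‖ * ε1 := by
            apply setIntegral_mono_on (hPint'.sub hQint').norm
              ((hRint.mono_set Ioc_subset_Ioi_self).mul_const ε1) measurableSet_Ioc hptw
        _ ≤ ∫ u in Ioi (0:ℝ), ‖R u‖ * ε1 := by
            apply setIntegral_mono_set (hRint.mul_const ε1)
            · exact ae_of_all _ fun u => mul_nonneg (norm_nonneg _) hε1.le
            · exact HasSubset.Subset.eventuallyLE Ioc_subset_Ioi_self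
        _ = A * ε1 := by rw [integral_mul_const]
        _ ≤ ε / 4 := by
            have h4 : (A + 1) * ε1 = ε / 4 := by
              rw [hε1def]; field_simp
            nlinarith [hε1.le]
    have hpiece : ∀ (c : ℝ), 0 ≤ c → ∀ s : Set ℝ, MeasurableSet s → s ⊆ Ioc 0 c →
        s ⊆ Ioi T0 → ‖∫ u in s, R u (f (c - u))‖ ≤ ε / 4 := by
      intro c hc s hsm hs hsT
      have := conv_piece_bound hRc hRint hfc hC hc hsm measurableSet_Ioi hs hsT
        (Ioi_subset_Ioi hT0pos.le)
      refine this.trans ?_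
      calc C * ∫ u in Ioi T0, ‖R u‖ ≤ C * δ := mul_le_mul_of_nonneg_left hT0 hCnn
        _ ≤ ε / 4 := by
            have h4 : (C + 1) * δ = ε / 4 := by
              rw [hδdef]; field_simp
            nlinarith [hδ.le]
    have hB2 : ‖∫ u in Ioc (t - M) t, P u‖ ≤ ε / 4 :=
      hpiece (t + τ) (by linarith) _ measurableSet_Ioc
        (Ioc_subset_Ioc (by linarith) (by linarith))
        (fun u hu => lt_of_le_of_lt (by linarith) hu.1)
    have hB3 : ‖∫ u in Ioc (t - M) t, Q u‖ ≤ ε / 4 :=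
      hpiece t ht0 _ measurableSet_Ioc (Ioc_subset_Ioc (by linarith) le_rfl)
        (fun u hu => lt_of_le_of_lt (by linarith) hu.1)
    have hB4 : ‖∫ u in Ioc t (t + τ), P u‖ ≤ ε / 4 :=
      hpiece (t + τ) (by linarith) _ measurableSet_Ioc
        (Ioc_subset_Ioc (by linarith) le_rfl)
        (fun u hu => lt_of_le_of_lt (by linarith) hu.1)
    calc ‖((∫ u in Ioc 0 (t - M), P u) - ∫ u in Ioc 0 (t - M), Q u)
          + ((∫ u in Ioc (t - M) t, P u) - ∫ u in Ioc (t - M) t, Q u)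
          + ∫ u in Ioc t (t + τ), P u‖
        ≤ ‖(∫ u in Ioc 0 (t - M), P u) - ∫ u in Ioc 0 (t - M), Q u‖
          + ‖(∫ u in Ioc (t - M) t, P u) - ∫ u in Ioc (t - M) t, Q u‖
          + ‖∫ u in Ioc t (t + τ), P u‖ := norm_add₃_le
      _ ≤ ε / 4 + (ε / 4 + ε / 4) + ε / 4 := by
          gcongr
          exact (norm_sub_le _ _).trans (add_le_add hB2 hB3)
      _ = ε := by ring
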